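/- Let n ≥ 1 be an integer. Then (1/(2n)) ∏_{k=1}^{2n−1} ( 2n − 2∑_{m=1}^{n} cos(2πkm/(2n)) ) = (2n)^{2n−2} (1 + 1/n)^n. (By the matrix tree theorem the left-hand side is the number of spanning trees in the n-th power graph of the 2n-cycle.) -/

import Mathlib

open Finset Real

lemma sum_cos_telescope (x : ℝ) (hx : Real.sin x ≠ 0) (n : ℕ) :
    ∑ m ∈ Finset.Icc 1 n, Real.cos (2 * m * x)
      = (Real.sin (x + (2 * n) * x) - Real.sin x) / (2 * Real.sin x) := by
  rw [eq_div_iff (mul_ne_zero two_ne_zero hx), Finset.sum_mul,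
    ← Finset.Ico_add_one_right_eq_Icc, Finset.sum_Ico_eq_sum_range]
  have : ∀ i ∈ Finset.range (n + 1 - 1),
      Real.cos (2 * ((1 + i : ℕ) : ℝ) * x) * (2 * Real.sin x)
        = Real.sin ((2 * (i + 1) + 1) * x) - Real.sin ((2 * i + 1) * x) := by
    intro i _
    have h1 : ((2 : ℝ) * (i + 1) + 1) * x = 2 * ((1 + i : ℕ) : ℝ) * x + x := by
      push_cast; ring
    have h2 : ((2 : ℝ) * i + 1) * x = 2 * ((1 + i : ℕ) : ℝ) * x - x := by
      push_cast; ring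
    rw [h1, h2, Real.sin_add, Real.sin_sub]
    ring
  rw [Finset.sum_congr rfl this]
  have := Finset.sum_range_sub (fun j : ℕ => Real.sin ((2 * j + 1) * x)) (n + 1 - 1)
  simp only [Nat.add_sub_cancel] at this ⊢
  push_cast at this
  rw [this]
  push_cast
  ring_nf

lemma prod_parity (c d : ℝ) : ∀ N : ℕ,
    ∏ k ∈ Finset.Icc 1 (2 * N + 1), (if Even k then c else d) = c ^ N * d ^ (N + 1) := by
  intro N
  induction N with
  | zero => simp
  | succ p ih =>
      have h1 : 2 * (p + 1) + 1 = (2 * p + 2) + 1 := by ring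
      rw [h1, Finset.prod_Icc_succ_top (by omega), Finset.prod_Icc_succ_top (by omega), ih]
      have he : Even (2 * p + 2) := ⟨p + 1, by ring⟩
      have ho : ¬ Even (2 * p + 2 + 1) := by simp [Nat.even_add_one, he]
      rw [if_pos he, if_neg ho]
      ring

theorem stmt_7 (n : ℕ) (hn : 1 ≤ n) :
    (1 / (2 * (n : ℝ))) * ∏ k ∈ Finset.Icc 1 (2 * n - 1),
        (2 * (n : ℝ) - 2 * ∑ m ∈ Finset.Icc 1 n, Real.cos (2 * Real.pi * k * m / (2 * n)))
      = (2 * (n : ℝ)) ^ (2 * n - 2) * (1 + 1 / (n : ℝ)) ^ n := by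
  obtain ⟨p, rfl⟩ : ∃ p, n = p + 1 := ⟨n - 1, by omega⟩
  set N : ℝ := ((p : ℝ) + 1) with hN
  have hN0 : (0 : ℝ) < N := by positivity
  have hcast : ((p + 1 : ℕ) : ℝ) = N := by push_cast [hN]; ring
  -- rewrite each factor
  have hfac : ∀ k ∈ Finset.Icc 1 (2 * (p + 1) - 1),
      (2 * ((p + 1 : ℕ) : ℝ) - 2 * ∑ m ∈ Finset.Icc 1 (p + 1),
          Real.cos (2 * Real.pi * k * m / (2 * (p + 1 : ℕ))))
        = (if Even k then 2 * N else 2 * N + 2) := by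
    intro k hk
    simp only [Finset.mem_Icc] at hk
    set x : ℝ := Real.pi * k / (2 * N) with hx
    have hxpos : 0 < x := by
      apply div_pos (mul_pos Real.pi_pos _) (by positivity)
      exact_mod_cast Nat.lt_of_lt_of_le Nat.zero_lt_one hk.1
    have hxlt : x < Real.pi := by
      rw [hx, div_lt_iff₀ (by positivity)]
      have : (k : ℝ) < 2 * N := by
        have : (k : ℕ) < 2 * (p + 1) := by omega
        rw [hN]; exact_mod_cast this
      nlinarith [Real.pi_pos]
    have hsx : Real.sin x ≠ 0 := ne_of_gt (Real.sin_pos_of_pos_of_lt_pi hxpos hxlt)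
    have harg : ∀ m : ℕ, 2 * Real.pi * k * m / (2 * ((p + 1 : ℕ) : ℝ)) = 2 * m * x := by
      intro m
      rw [hcast, hx]
      field_simp
    rw [Finset.sum_congr rfl (fun m _ => by rw [harg m]), sum_cos_telescope x hsx (p + 1)]
    have hend : Real.sin (x + (2 * ((p + 1 : ℕ) : ℝ)) * x) = (-1) ^ k * Real.sin x := by
      have : x + (2 * ((p + 1 : ℕ) : ℝ)) * x = x + (k : ℝ) * Real.pi := by
        rw [hcast, hx]; field_simp
      rw [this, Real.sin_add_nat_mul_pi]
    rw [hend, hcast]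
    rcases Nat.even_or_odd k with he | ho
    · rw [if_pos he, he.neg_one_pow]
      field_simp
      ring
    · rw [if_neg (Nat.not_even_iff_odd.mpr ho), ho.neg_one_pow]
      field_simp
      ring
  rw [Finset.prod_congr rfl hfac]
  have h2 : 2 * (p + 1) - 1 = 2 * p + 1 := by omega
  rw [h2, prod_parity (2 * N) (2 * N + 2) p]
  have h3 : 2 * N + 2 = (2 * N) * (1 + 1 / N) := by field_simp
  have hcast2 : ((p + 1 : ℕ) : ℝ) = N := hcast
  rw [h3, mul_pow]
  have h4 : 2 * (p + 1) - 2 = 2 * p := by omega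
  rw [h4, hcast2]
  have h5 : (2 * N) ^ p * (2 * N) ^ (p + 1) = (2 * N) ^ (2 * p) * (2 * N) := by
    rw [← pow_add]
    rw [show p + (p + 1) = 2 * p + 1 from by ring, pow_succ]
  have h6 : (1 : ℝ) + 1 / ((p : ℝ) + 1) = 1 + 1 / N := by rw [hN]
  rw [h6]
  rw [mul_pow (2*N) (1+1/N) (p+1), ← mul_pow 2 N p,
      show (2*N:ℝ)^p * ((2*N)^(p+1) * (1+1/N)^(p+1))
        = ((2*N)^p * (2*N)^(p+1)) * (1+1/N)^(p+1) from by ring, h5]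
  field_simp
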